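/- Let (X,d) be a proper geodesic metric space and let ν be a Borel measure on X whose support is all of X and which is finite on bounded sets, satisfying the Bishop–Gromov inequality with parameters (K,N), where K ≤ 0 and 1 < N < ∞. Let ε₁, ε₂ > 0, let 𝒩₁ be a maximal ε₁-separated net and 𝒩₂ a maximal ε₂-separated net in X, with discretization graphs G(𝒩₁), G(𝒩₂) and combinatorial metrics 𝐝₁, 𝐝₂. Then the metric spaces (𝒩₁,𝐝₁) and (𝒩₂,𝐝₂) are roughly isometric. -/

import Mathlib

open MeasureTheory Metric

/-- The model volume density `S_K^N` for `K ≤ 0`, `1 < N < ∞`. -/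
noncomputable def SKN (K N t : ℝ) : ℝ :=
  if K = 0 then t ^ (N - 1)
  else Real.sinh (Real.sqrt (|K| / (N - 1)) * t) ^ (N - 1)

/-- A Borel measure `ν` of full support satisfies the Bishop–Gromov inequality with
parameters `(K, N)` if for every `x` the function
`r ↦ ν(B(x,r)) / ∫₀^r S_K^N(t) dt` is nonincreasing on `(0, ∞)`. -/
def BishopGromov {X : Type*} [MetricSpace X] [MeasurableSpace X]
    (ν : Measure X) (K N : ℝ) : Prop :=
  ∀ x : X, AntitoneOn
    (fun r => (ν (ball x r)).toReal / ∫ t in (0:ℝ)..r, SKN K N t) (Set.Ioi 0)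

/-- A metric space is geodesic if every pair of points is joined by a geodesic
(an isometric image of a real interval). -/
def IsGeodesicSpace (X : Type*) [MetricSpace X] : Prop :=
  ∀ x y : X, ∃ f : ℝ → X, f 0 = x ∧ f (dist x y) = y ∧
    ∀ s ∈ Set.Icc (0:ℝ) (dist x y), ∀ t ∈ Set.Icc (0:ℝ) (dist x y),
      dist (f s) (f t) = |s - t|

/-- A subset `𝒩` of a metric space is `ε`-separated if distinct points of `𝒩` are at
distance at least `ε`. -/
def IsSeparated {X : Type*} [MetricSpace X] (𝒩 : Set X) (ε : ℝ) : Prop :=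
  ∀ p ∈ 𝒩, ∀ q ∈ 𝒩, p ≠ q → ε ≤ dist p q

/-- A maximal `ε`-separated net: an `ε`-separated set maximal with respect to inclusion. -/
def IsMaximalNet {X : Type*} [MetricSpace X] (𝒩 : Set X) (ε : ℝ) : Prop :=
  IsSeparated 𝒩 ε ∧ ∀ M : Set X, 𝒩 ⊆ M → IsSeparated M ε → M = 𝒩

/-- The discretization graph `G(𝒩)`: vertices are points of `𝒩`, and distinct `p, q`
are adjacent iff `B(p,ε) ∩ B(q,ε) ≠ ∅`, equivalently `dist p q < 2ε`. -/
def netGraph {X : Type*} [MetricSpace X] (𝒩 : Set X) (ε : ℝ) : SimpleGraph 𝒩 where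
  Adj p q := p ≠ q ∧ dist (p : X) (q : X) < 2 * ε
  symm := by
    constructor
    intro p q h
    exact ⟨h.1.symm, by rw [dist_comm]; exact h.2⟩
  loopless := by
    constructor
    intro p h
    exact h.1 rfl

/-- `f` is a rough isometry from `(α, dX)` to `(β, dY)`: there are `a ≥ 1`, `b ≥ 0` with
`(1/a)·dX x₁ x₂ − b ≤ dY (f x₁) (f x₂) ≤ a·dX x₁ x₂ + b`, and `f` is `ε₁`-full for
some `ε₁ > 0`. -/
def IsRoughIsometry {α β : Type*} (dX : α → α → ℝ) (dY : β → β → ℝ) (f : α → β) : Prop :=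
  (∃ a : ℝ, 1 ≤ a ∧ ∃ b : ℝ, 0 ≤ b ∧ ∀ x₁ x₂ : α,
    (1 / a) * dX x₁ x₂ - b ≤ dY (f x₁) (f x₂) ∧
    dY (f x₁) (f x₂) ≤ a * dX x₁ x₂ + b) ∧
  ∃ ε₁ > (0:ℝ), ∀ y : β, ∃ x : α, dY y (f x) ≤ ε₁

theorem net_cover {X : Type*} [MetricSpace X] {𝒩 : Set X} {ε : ℝ} (hε : 0 < ε)
    (h : IsMaximalNet 𝒩 ε) (x : X) : ∃ p ∈ 𝒩, dist x p < ε := by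
  by_contra hc
  push_neg at hc
  have hx : x ∉ 𝒩 := by
    intro hx
    have := hc x hx
    simp at this
    exact absurd this hε.not_ge
  have hsep : IsSeparated (insert x 𝒩) ε := by
    rintro p (rfl | hp) q (rfl | hq) hpq
    · exact absurd rfl hpq
    · exact hc q hq
    · rw [dist_comm]; exact hc p hp
    · exact h.1 p hp q hq hpq
  have heq := h.2 _ (Set.subset_insert x 𝒩) hsep
  exact hx (heq ▸ Set.mem_insert x 𝒩)

theorem SKN_continuous {K N : ℝ} (hN : 1 < N) : Continuous (SKN K N) := by
  have h1 : (0:ℝ) ≤ N - 1 := by linarith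
  have hpow : Continuous fun x : ℝ => x ^ (N - 1) :=
    continuous_iff_continuousAt.2 fun x => Real.continuousAt_rpow_const x _ (Or.inr h1)
  unfold SKN
  split_ifs with hK0
  · exact hpow
  · exact hpow.comp (Real.continuous_sinh.comp (continuous_const.mul continuous_id))

theorem SKN_pos {K N : ℝ} (hN : 1 < N) {t : ℝ} (ht : 0 < t) : 0 < SKN K N t := by
  unfold SKN
  split_ifs with hK0
  · exact Real.rpow_pos_of_pos ht _
  · refine Real.rpow_pos_of_pos (Real.sinh_pos_iff.2 ?_) _
    have hc : 0 < Real.sqrt (|K| / (N - 1)) :=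
      Real.sqrt_pos.2 (div_pos (abs_pos.2 hK0) (by linarith))
    exact mul_pos hc ht

theorem integral_SKN_pos {K N : ℝ} (hN : 1 < N) {r : ℝ} (hr : 0 < r) :
    0 < ∫ t in (0:ℝ)..r, SKN K N t :=
  intervalIntegral.intervalIntegral_pos_of_pos_on
    ((SKN_continuous hN).intervalIntegrable 0 r)
    (fun x hx => SKN_pos hN hx.1) hr

theorem net_packing {X : Type*} [MetricSpace X] [MeasurableSpace X] [BorelSpace X]
    (ν : Measure X)
    (hfull : ∀ x : X, ∀ r > (0:ℝ), 0 < ν (ball x r))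
    (hbdd : ∀ s : Set X, Bornology.IsBounded s → ν s < ⊤)
    {K N : ℝ} (hN : 1 < N) (hBG : BishopGromov ν K N)
    {𝒩 : Set X} {ε : ℝ} (hε : 0 < ε) (hsep : IsSeparated 𝒩 ε)
    {R : ℝ} (hR : 0 < R) :
    ∃ C : ℝ, ∀ (x : X) (F : Finset X), ↑F ⊆ 𝒩 → (∀ u ∈ F, dist u x ≤ R) →
      (F.card : ℝ) ≤ C := by
  set I₁ : ℝ := ∫ t in (0:ℝ)..(ε/2), SKN K N t with hI₁def
  set I₂ : ℝ := ∫ t in (0:ℝ)..(2*R+ε), SKN K N t with hI₂def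
  have hI₁ : 0 < I₁ := integral_SKN_pos hN (by linarith)
  have hI₂ : 0 < I₂ := integral_SKN_pos hN (by linarith)
  refine ⟨I₂ / I₁, ?_⟩
  intro x F hF𝒩 hFR
  set V : ℝ := (ν (ball x (R + ε))).toReal with hVdef
  have hVfin : ν (ball x (R + ε)) ≠ ⊤ := (hbdd _ isBounded_ball).ne
  have hV : 0 < V := ENNReal.toReal_pos (hfull x (R+ε) (by linarith)).ne' hVfin
  -- each small ball has measure at least (I₁/I₂) * V
  have key : ∀ u ∈ F, I₁ / I₂ * V ≤ (ν (ball u (ε/2))).toReal := by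
    intro u hu
    have hsub : ball x (R + ε) ⊆ ball u (2*R + ε) := by
      intro y hy
      have h1 : dist y x < R + ε := mem_ball.1 hy
      have h2 : dist u x ≤ R := hFR u hu
      have : dist y u < 2*R + ε := by
        calc dist y u ≤ dist y x + dist x u := dist_triangle _ _ _
        _ = dist y x + dist u x := by rw [dist_comm x u]
        _ < 2*R + ε := by linarith
      exact mem_ball.2 this
    have hmono : V ≤ (ν (ball u (2*R+ε))).toReal :=
      ENNReal.toReal_mono (hbdd _ isBounded_ball).ne (measure_mono hsub)
    have hbg := hBG u (Set.mem_Ioi.2 (by linarith : (0:ℝ) < ε/2))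
      (Set.mem_Ioi.2 (by linarith : (0:ℝ) < 2*R+ε)) (by linarith)
    simp only at hbg
    -- hbg : ν(ball u (2R+ε)).toReal / I₂ ≤ ν(ball u (ε/2)).toReal / I₁
    have h3 : V / I₂ ≤ (ν (ball u (ε/2))).toReal / I₁ :=
      le_trans (by gcongr) hbg
    calc I₁ / I₂ * V = (V / I₂) * I₁ := by ring
    _ ≤ ((ν (ball u (ε/2))).toReal / I₁) * I₁ := by gcongr
    _ = (ν (ball u (ε/2))).toReal := by field_simp
  -- disjointness
  have hdisj : (↑F : Set X).PairwiseDisjoint (fun u => ball u (ε/2)) := by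
    intro u hu v hv huv
    exact ball_disjoint_ball (by
      have := hsep u (hF𝒩 hu) v (hF𝒩 hv) huv
      linarith)
  have hunion : ν (⋃ u ∈ F, ball u (ε/2)) = ∑ u ∈ F, ν (ball u (ε/2)) :=
    measure_biUnion_finset hdisj (fun u _ => measurableSet_ball)
  have hsub2 : (⋃ u ∈ F, ball u (ε/2)) ⊆ ball x (R + ε) := by
    intro y hy
    simp only [Set.mem_iUnion] at hy
    obtain ⟨u, hu, hyu⟩ := hy
    have : dist y u < ε/2 := mem_ball.1 hyu
    have h2 : dist u x ≤ R := hFR u hu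
    exact mem_ball.2 (by
      calc dist y x ≤ dist y u + dist u x := dist_triangle _ _ _
      _ < R + ε := by linarith)
  have hsumV : ∑ u ∈ F, (ν (ball u (ε/2))).toReal ≤ V := by
    have hfin : ∀ u ∈ F, ν (ball u (ε/2)) ≠ ⊤ := fun u _ => (hbdd _ isBounded_ball).ne
    rw [← ENNReal.toReal_sum hfin, ← hunion]
    exact ENNReal.toReal_mono hVfin (measure_mono hsub2)
  have hcard : (F.card : ℝ) * (I₁ / I₂ * V) ≤ V := by
    have := Finset.card_nsmul_le_sum F (fun u => (ν (ball u (ε/2))).toReal) (I₁/I₂*V) key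
    rw [nsmul_eq_mul] at this
    linarith
  -- conclude
  rw [le_div_iff₀ hI₁]
  have h5 : (F.card : ℝ) * I₁ * V ≤ I₂ * V := by
    have h6 : (F.card : ℝ) * (I₁ / I₂ * V) * I₂ ≤ V * I₂ := by
      apply mul_le_mul_of_nonneg_right hcard hI₂.le
    calc (F.card : ℝ) * I₁ * V = (F.card : ℝ) * (I₁ / I₂ * V) * I₂ := by
          field_simp
    _ ≤ V * I₂ := h6
    _ = I₂ * V := by ring
  exact le_of_mul_le_mul_right (by linarith) hV

theorem net_walk {X : Type*} [MetricSpace X] (hgeo : IsGeodesicSpace X)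
    {𝒩 : Set X} {ε : ℝ} (hε : 0 < ε) (hnet : IsMaximalNet 𝒩 ε) (r s : 𝒩) :
    ∃ w : (netGraph 𝒩 ε).Walk r s,
      ∀ v ∈ w.support, dist (v : X) (r : X) ≤ dist (r : X) (s : X) + ε := by
  set G := netGraph 𝒩 ε with hG
  set D := dist (r : X) (s : X) with hDdef
  have hD0 : (0:ℝ) ≤ D := dist_nonneg
  obtain ⟨f, hf0, hfD, hfiso⟩ := hgeo (r : X) (s : X)
  set Q : 𝒩 → Prop := fun u => ∃ w : G.Walk r u,
    ∀ v ∈ w.support, dist (v:X) (r:X) ≤ D + ε with hQdef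
  set A : Set ℝ := {t | t ∈ Set.Icc 0 D ∧ ∃ u : 𝒩, dist (u:X) (f t) < ε ∧ Q u} with hAdef
  have hQr : Q r := by
    refine ⟨SimpleGraph.Walk.nil, ?_⟩
    intro v hv
    simp only [SimpleGraph.Walk.support_nil, List.mem_singleton] at hv
    subst hv
    simp only [dist_self]
    linarith
  have h0A : (0:ℝ) ∈ A := by
    refine ⟨⟨le_refl 0, hD0⟩, r, ?_, hQr⟩
    rw [hf0, dist_self]
    exact hε
  have hAne : A.Nonempty := ⟨0, h0A⟩
  have hAbdd : BddAbove A := ⟨D, fun t ht => ht.1.2⟩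
  -- extension step
  have hext : ∀ t ∈ Set.Icc (0:ℝ) D, ∀ u : 𝒩, dist (u:X) (f t) < ε →
      (∃ t' ∈ A, |t - t'| ≤ ε - dist (u:X) (f t)) → Q u := by
    rintro t ht u hd ⟨t', ht'A, htt'⟩
    obtain ⟨ht'Icc, u', hu'd, hu'Q⟩ := ht'A
    have hft' : dist (u:X) (f t') ≤ ε := by
      have hiso := hfiso t ht t' ht'Icc
      calc dist (u:X) (f t') ≤ dist (u:X) (f t) + dist (f t) (f t') := dist_triangle _ _ _
      _ = dist (u:X) (f t) + |t - t'| := by rw [hiso]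
      _ ≤ ε := by linarith
    have huu' : dist (u:X) (u':X) < 2 * ε := by
      have : dist (f t') (u':X) < ε := by rw [dist_comm]; exact hu'd
      calc dist (u:X) (u':X) ≤ dist (u:X) (f t') + dist (f t') (u':X) := dist_triangle _ _ _
      _ < ε + ε := by linarith
      _ = 2 * ε := by ring
    have hur : dist (u:X) (r:X) ≤ D + ε := by
      have h1 : dist (f t) (r:X) = t := by
        have := hfiso t ht 0 ⟨le_refl 0, hD0⟩
        rw [hf0] at this
        rw [this, sub_zero, abs_of_nonneg ht.1]
      calc dist (u:X) (r:X) ≤ dist (u:X) (f t) + dist (f t) (r:X) := dist_triangle _ _ _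
      _ = dist (u:X) (f t) + t := by rw [h1]
      _ ≤ D + ε := by have := ht.2; linarith
    by_cases heq : u = u'
    · subst heq; exact hu'Q
    · obtain ⟨w', hw'⟩ := hu'Q
      have hadj : G.Adj u' u := by
        refine ⟨fun h => heq h.symm, ?_⟩
        rw [dist_comm]
        exact huu'
      refine ⟨w'.concat hadj, ?_⟩
      intro v hv
      rw [SimpleGraph.Walk.support_concat, List.mem_append] at hv
      rcases hv with hv | hv
      · exact hw' v hv
      · simp only [List.mem_singleton] at hv
        subst hv
        exact hur
  set T := sSup A with hTdef
  have hTIcc : T ∈ Set.Icc (0:ℝ) D :=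
    ⟨le_csSup hAbdd h0A, csSup_le hAne (fun t ht => ht.1.2)⟩
  -- T has a witness
  have hTA : ∃ u : 𝒩, dist (u:X) (f T) < ε ∧ Q u := by
    obtain ⟨u, hu𝒩, hud⟩ := net_cover hε hnet (f T)
    set uu : 𝒩 := ⟨u, hu𝒩⟩ with huu
    have hud' : dist (uu:X) (f T) < ε := by rw [dist_comm]; exact hud
    obtain ⟨t', ht'A, ht'⟩ := exists_lt_of_lt_csSup hAne
      (by linarith : T - (ε - dist (uu:X) (f T)) < T)
    have ht'T : t' ≤ T := le_csSup hAbdd ht'A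
    refine ⟨uu, hud', hext T hTIcc uu hud' ⟨t', ht'A, ?_⟩⟩
    rw [abs_of_nonneg (by linarith : (0:ℝ) ≤ T - t')]
    linarith
  have hTD : T = D := by
    by_contra hne
    have hTltD : T < D := lt_of_le_of_ne hTIcc.2 hne
    obtain ⟨u, hud, huQ⟩ := hTA
    have hη0 : 0 < ε - dist (u:X) (f T) := by linarith
    set t'' := min D (T + (ε - dist (u:X) (f T))/2) with ht''def
    have ht''Icc : t'' ∈ Set.Icc (0:ℝ) D := by
      constructor
      · apply le_min hD0
        have := hTIcc.1
        linarith
      · exact min_le_left _ _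
    have hTt'' : T < t'' := lt_min hTltD (by linarith)
    have ht''A : t'' ∈ A := by
      refine ⟨ht''Icc, u, ?_, huQ⟩
      have hiso := hfiso t'' ht''Icc T hTIcc
      have habs : |t'' - T| ≤ (ε - dist (u:X) (f T))/2 := by
        rw [abs_of_nonneg (by linarith : (0:ℝ) ≤ t'' - T)]
        have : t'' ≤ T + (ε - dist (u:X) (f T))/2 := min_le_right _ _
        linarith
      calc dist (u:X) (f t'') ≤ dist (u:X) (f T) + dist (f T) (f t'') := dist_triangle _ _ _
      _ = dist (u:X) (f T) + |t'' - T| := by rw [dist_comm (f T)]; rw [hiso]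
      _ < ε := by linarith
    have := le_csSup hAbdd ht''A
    linarith
  -- conclude
  rw [hTD, hfD] at hTA
  obtain ⟨u, hud, w, hw⟩ := hTA
  by_cases heq : u = s
  · subst heq
    exact ⟨w, hw⟩
  · have hadj : G.Adj u s := by
      refine ⟨heq, ?_⟩
      calc dist (u:X) (s:X) < ε := hud
      _ < 2 * ε := by linarith
    refine ⟨w.concat hadj, ?_⟩
    intro v hv
    rw [SimpleGraph.Walk.support_concat, List.mem_append] at hv
    rcases hv with hv | hv
    · exact hw v hv
    · simp only [List.mem_singleton] at hv
      subst hv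
      rw [dist_comm]
      linarith

theorem net_preconnected {X : Type*} [MetricSpace X] (hgeo : IsGeodesicSpace X)
    {𝒩 : Set X} {ε : ℝ} (hε : 0 < ε) (hnet : IsMaximalNet 𝒩 ε) :
    (netGraph 𝒩 ε).Preconnected := by
  intro r s
  obtain ⟨w, -⟩ := net_walk hgeo hε hnet r s
  exact ⟨w⟩

theorem walk_dist_le {X : Type*} [MetricSpace X] {𝒩 : Set X} {ε : ℝ}
    {p q : 𝒩} (w : (netGraph 𝒩 ε).Walk p q) :
    dist (p:X) (q:X) ≤ 2 * ε * w.length := by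
  induction w with
  | nil => simp
  | @cons a b c h w ih =>
    have h2 : dist (a:X) (b:X) < 2 * ε := h.2
    calc dist (a:X) (c:X) ≤ dist (a:X) (b:X) + dist (b:X) (c:X) := dist_triangle _ _ _
    _ ≤ 2 * ε + 2 * ε * w.length := by linarith
    _ = 2 * ε * (SimpleGraph.Walk.cons h w).length := by
        rw [SimpleGraph.Walk.length_cons]
        push_cast
        ring

theorem net_dist_le {X : Type*} [MetricSpace X] (hgeo : IsGeodesicSpace X)
    {𝒩 : Set X} {ε : ℝ} (hε : 0 < ε) (hnet : IsMaximalNet 𝒩 ε)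
    {R C : ℝ}
    (hpack : ∀ (x : X) (F : Finset X), ↑F ⊆ 𝒩 → (∀ u ∈ F, dist u x ≤ R + ε) →
      (F.card : ℝ) ≤ C) :
    ∀ r s : 𝒩, dist (r:X) (s:X) ≤ R → ((netGraph 𝒩 ε).dist r s : ℝ) ≤ C := by
  classical
  intro r s hrs
  obtain ⟨w, hw⟩ := net_walk hgeo hε hnet r s
  set p := w.toPath with hp
  have hdist : (netGraph 𝒩 ε).dist r s ≤ p.1.length := SimpleGraph.dist_le p.1
  have hnodup : p.1.support.Nodup := p.2.support_nodup
  set F : Finset X := (p.1.support.map Subtype.val).toFinset with hF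
  have hFcard : F.card = p.1.support.length := by
    rw [hF, List.toFinset_card_of_nodup (hnodup.map Subtype.val_injective),
      List.length_map]
  have hmem : ∀ x ∈ F, ∃ v ∈ p.1.support, (v:X) = x := by
    intro x hx
    rw [hF, List.mem_toFinset, List.mem_map] at hx
    obtain ⟨v, hv, rfl⟩ := hx
    exact ⟨v, hv, rfl⟩
  have hF𝒩 : ↑F ⊆ 𝒩 := by
    intro x hx
    obtain ⟨v, -, rfl⟩ := hmem x hx
    exact v.2
  have hFR : ∀ u ∈ F, dist u (r:X) ≤ R + ε := by
    intro u hu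
    obtain ⟨v, hv, rfl⟩ := hmem u hu
    have hv' : v ∈ w.support := SimpleGraph.Walk.support_toPath_subset w hv
    have := hw v hv'
    linarith
  have hC := hpack (r:X) F hF𝒩 hFR
  have hsupp : p.1.support.length = p.1.length + 1 := p.1.length_support
  have : (p.1.length : ℝ) ≤ C := by
    rw [hFcard, hsupp] at hC
    push_cast at hC
    linarith
  calc ((netGraph 𝒩 ε).dist r s : ℝ) ≤ (p.1.length : ℝ) := by exact_mod_cast hdist
  _ ≤ C := this

theorem net_dist_linear {X : Type*} [MetricSpace X] (hgeo : IsGeodesicSpace X)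
    {𝒩 : Set X} {ε : ℝ} (hε : 0 < ε) (hnet : IsMaximalNet 𝒩 ε)
    (hconn : (netGraph 𝒩 ε).Connected)
    {C₀ : ℝ} (hC₀ : 0 ≤ C₀)
    (hloc : ∀ r s : 𝒩, dist (r:X) (s:X) ≤ 3*ε → ((netGraph 𝒩 ε).dist r s : ℝ) ≤ C₀) :
    ∀ r s : 𝒩, ((netGraph 𝒩 ε).dist r s : ℝ) ≤ C₀ * (dist (r:X) (s:X)/ε + 2) := by
  intro r s
  set D := dist (r:X) (s:X) with hDdef
  obtain ⟨f, hf0, hfD, hfiso⟩ := hgeo (r:X) (s:X)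
  by_cases hD0 : D = 0
  · have hrs : r = s := Subtype.ext (dist_eq_zero.1 hD0)
    subst hrs
    rw [SimpleGraph.dist_self]
    have : (0:ℝ) ≤ C₀ * (D/ε + 2) := by
      apply mul_nonneg hC₀
      rw [hD0]
      positivity
    simpa using this
  have hDpos : 0 < D := lt_of_le_of_ne dist_nonneg (Ne.symm hD0)
  set n := ⌈D/ε⌉₊ with hn
  have hn1 : 0 < n := Nat.ceil_pos.2 (div_pos hDpos hε)
  have hnne : (n:ℝ) ≠ 0 := Nat.cast_ne_zero.2 hn1.ne'
  set δ := D / n with hδ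
  have hδpos : 0 < δ := div_pos hDpos (by exact_mod_cast hn1)
  have hδle : δ ≤ ε := by
    rw [hδ, div_le_iff₀ (by exact_mod_cast hn1)]
    have h1 : D/ε ≤ (n:ℝ) := Nat.le_ceil _
    calc D = (D/ε) * ε := by field_simp
    _ ≤ (n:ℝ) * ε := by gcongr
    _ = ε * n := by ring
  have hIcc : ∀ i : ℕ, i ≤ n → ((i:ℝ) * δ) ∈ Set.Icc (0:ℝ) D := by
    intro i hi
    constructor
    · positivity
    · calc (i:ℝ) * δ ≤ (n:ℝ) * δ :=
          mul_le_mul_of_nonneg_right (by exact_mod_cast hi) hδpos.le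
      _ = D := by rw [hδ]; field_simp
  have key : ∀ i : ℕ, i ≤ n → ∀ u : 𝒩, dist (u:X) (f ((i:ℝ)*δ)) < ε →
      ((netGraph 𝒩 ε).dist r u : ℝ) ≤ C₀ * (i+1) := by
    intro i
    induction i with
    | zero =>
      intro _ u hu
      have hu' : dist (u:X) (r:X) < ε := by
        have : ((0:ℕ):ℝ) * δ = 0 := by norm_num
        rwa [this, hf0] at hu
      have := hloc r u (by rw [dist_comm]; linarith)
      push_cast
      linarith
    | succ i ih =>
      intro hin u hu
      have hi : i ≤ n := le_trans (Nat.le_succ i) hin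
      obtain ⟨u', hu'𝒩, hu'd⟩ := net_cover hε hnet (f ((i:ℝ)*δ))
      set v : 𝒩 := ⟨u', hu'𝒩⟩ with hv
      have hvd : dist (v:X) (f ((i:ℝ)*δ)) < ε := by rw [dist_comm]; exact hu'd
      have hIH := ih hi v hvd
      have hstep : dist (f ((i:ℝ)*δ)) (f (((i+1:ℕ):ℝ)*δ)) = δ := by
        rw [hfiso _ (hIcc i hi) _ (hIcc (i+1) hin)]
        push_cast
        rw [abs_of_nonpos (by linarith [hδpos] : (i:ℝ)*δ - ((i:ℝ)+1)*δ ≤ 0)]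
        ring
      have hvu : dist (v:X) (u:X) ≤ 3*ε := by
        calc dist (v:X) (u:X) ≤ dist (v:X) (f ((i:ℝ)*δ)) + dist (f ((i:ℝ)*δ)) (u:X) :=
          dist_triangle _ _ _
        _ ≤ dist (v:X) (f ((i:ℝ)*δ)) +
            (dist (f ((i:ℝ)*δ)) (f (((i+1:ℕ):ℝ)*δ)) + dist (f (((i+1:ℕ):ℝ)*δ)) (u:X)) := by
          have := dist_triangle (f ((i:ℝ)*δ)) (f (((i+1:ℕ):ℝ)*δ)) (u:X)
          linarith
        _ ≤ ε + (δ + ε) := by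
          rw [hstep]
          have : dist (f (((i+1:ℕ):ℝ)*δ)) (u:X) < ε := by rw [dist_comm]; exact hu
          linarith
        _ ≤ 3*ε := by linarith
      have hloc2 := hloc v u hvu
      have htri : (netGraph 𝒩 ε).dist r u ≤ (netGraph 𝒩 ε).dist r v + (netGraph 𝒩 ε).dist v u :=
        hconn.dist_triangle
      have : ((netGraph 𝒩 ε).dist r u : ℝ) ≤ C₀ * (i+1) + C₀ := by
        have := htri
        push_cast at this ⊢
        have h1 : ((netGraph 𝒩 ε).dist r u : ℝ) ≤
            ((netGraph 𝒩 ε).dist r v : ℝ) + ((netGraph 𝒩 ε).dist v u : ℝ) := by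
          exact_mod_cast htri
        linarith
      push_cast
      push_cast at this
      linarith
  have hfin := key n le_rfl s (by
    have : ((n:ℝ) * δ) = D := by rw [hδ]; field_simp
    rw [this, hfD, dist_self]
    exact hε)
  have hceil : (n:ℝ) ≤ D/ε + 1 := le_of_lt (Nat.ceil_lt_add_one (by positivity))
  calc ((netGraph 𝒩 ε).dist r s : ℝ) ≤ C₀ * (n+1) := hfin
  _ ≤ C₀ * (D/ε + 2) := by
    apply mul_le_mul_of_nonneg_left _ hC₀
    linarith

theorem stmt_10 {X : Type*} [MetricSpace X] [ProperSpace X]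
    [MeasurableSpace X] [BorelSpace X]
    (hgeo : IsGeodesicSpace X)
    (ν : Measure X)
    (hfull : ∀ x : X, ∀ r > (0:ℝ), 0 < ν (ball x r))
    (hbdd : ∀ s : Set X, Bornology.IsBounded s → ν s < ⊤)
    (K N : ℝ) (hK : K ≤ 0) (hN : 1 < N)
    (hBG : BishopGromov ν K N)
    (ε₁ ε₂ : ℝ) (hε₁ : 0 < ε₁) (hε₂ : 0 < ε₂)
    (𝒩₁ 𝒩₂ : Set X) (hnet₁ : IsMaximalNet 𝒩₁ ε₁) (hnet₂ : IsMaximalNet 𝒩₂ ε₂)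
    (h𝒩₁ : 𝒩₁.Nonempty) (h𝒩₂ : 𝒩₂.Nonempty) :
    ∃ f : 𝒩₁ → 𝒩₂,
      IsRoughIsometry
        (fun p q => ((netGraph 𝒩₁ ε₁).dist p q : ℝ))
        (fun p q => ((netGraph 𝒩₂ ε₂).dist p q : ℝ)) f := by
  classical
  have hN' := hN
  have hpre₁ := net_preconnected hgeo hε₁ hnet₁
  have hpre₂ := net_preconnected hgeo hε₂ hnet₂
  have hconn₁ : (netGraph 𝒩₁ ε₁).Connected :=
    (SimpleGraph.connected_iff _).2 ⟨hpre₁, ⟨⟨h𝒩₁.choose, h𝒩₁.choose_spec⟩⟩⟩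
  have hconn₂ : (netGraph 𝒩₂ ε₂).Connected :=
    (SimpleGraph.connected_iff _).2 ⟨hpre₂, ⟨⟨h𝒩₂.choose, h𝒩₂.choose_spec⟩⟩⟩
  -- the map f : nearest-ish point of 𝒩₂
  have hfex : ∀ p : 𝒩₁, ∃ q : 𝒩₂, dist (p:X) (q:X) < ε₂ := by
    intro p
    obtain ⟨q, hq𝒩, hqd⟩ := net_cover hε₂ hnet₂ (p:X)
    exact ⟨⟨q, hq𝒩⟩, hqd⟩
  choose f hf using hfex
  -- local bound for G₂ at radius R₂ := 2ε₁ + 2ε₂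
  set R₂ : ℝ := 2*ε₁ + 2*ε₂ with hR₂
  obtain ⟨P₂, hP₂pack⟩ := net_packing ν hfull hbdd hN hBG hε₂ hnet₂.1
    (show (0:ℝ) < R₂ + ε₂ by rw [hR₂]; linarith)
  have hP₂0 : (0:ℝ) ≤ P₂ := by
    simpa using hP₂pack (h𝒩₂.choose) ∅ (by simp) (by simp)
  have hA₂ : ∀ r s : 𝒩₂, dist (r:X) (s:X) ≤ R₂ → ((netGraph 𝒩₂ ε₂).dist r s : ℝ) ≤ P₂ :=
    net_dist_le hgeo hε₂ hnet₂ hP₂pack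
  -- local bound for G₁ at radius 3ε₁ and the linear bound
  obtain ⟨C₀, hC₀pack⟩ := net_packing ν hfull hbdd hN hBG hε₁ hnet₁.1
    (show (0:ℝ) < 3*ε₁ + ε₁ by linarith)
  have hC₀0 : (0:ℝ) ≤ C₀ := by
    simpa using hC₀pack (h𝒩₁.choose) ∅ (by simp) (by simp)
  have hloc₁ : ∀ r s : 𝒩₁, dist (r:X) (s:X) ≤ 3*ε₁ → ((netGraph 𝒩₁ ε₁).dist r s : ℝ) ≤ C₀ :=
    net_dist_le hgeo hε₁ hnet₁ hC₀pack
  have hlin := net_dist_linear hgeo hε₁ hnet₁ hconn₁ hC₀0 hloc₁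
  -- upper bound
  have hupper : ∀ p q : 𝒩₁,
      ((netGraph 𝒩₂ ε₂).dist (f p) (f q) : ℝ) ≤ P₂ * ((netGraph 𝒩₁ ε₁).dist p q) := by
    intro p q
    obtain ⟨w, hwlen⟩ := (hpre₁ p q).exists_walk_length_eq_dist
    rw [← hwlen]
    clear hwlen
    induction w with
    | nil => simp
    | @cons a b c h w ih =>
      have hedge : ((netGraph 𝒩₂ ε₂).dist (f a) (f b) : ℝ) ≤ P₂ := by
        apply hA₂
        have h1 : dist ((a:𝒩₁):X) ((f a : 𝒩₂):X) < ε₂ := hf a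
        have h2 : dist ((b:𝒩₁):X) ((f b : 𝒩₂):X) < ε₂ := hf b
        have h3 : dist ((a:𝒩₁):X) ((b:𝒩₁):X) < 2*ε₁ := h.2
        have t1 : dist ((f a : 𝒩₂):X) ((f b : 𝒩₂):X) ≤
            dist ((f a : 𝒩₂):X) ((a:𝒩₁):X) + dist ((a:𝒩₁):X) ((f b : 𝒩₂):X) :=
          dist_triangle _ _ _
        have t2 : dist ((a:𝒩₁):X) ((f b : 𝒩₂):X) ≤
            dist ((a:𝒩₁):X) ((b:𝒩₁):X) + dist ((b:𝒩₁):X) ((f b : 𝒩₂):X) :=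
          dist_triangle _ _ _
        have h1' : dist ((f a : 𝒩₂):X) ((a:𝒩₁):X) < ε₂ := by rw [dist_comm]; exact h1
        rw [hR₂]
        linarith
      have htri : (netGraph 𝒩₂ ε₂).dist (f a) (f c) ≤
          (netGraph 𝒩₂ ε₂).dist (f a) (f b) + (netGraph 𝒩₂ ε₂).dist (f b) (f c) :=
        hconn₂.dist_triangle
      have htri' : ((netGraph 𝒩₂ ε₂).dist (f a) (f c) : ℝ) ≤
          ((netGraph 𝒩₂ ε₂).dist (f a) (f b) : ℝ) + ((netGraph 𝒩₂ ε₂).dist (f b) (f c) : ℝ) := by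
        exact_mod_cast htri
      rw [SimpleGraph.Walk.length_cons]
      push_cast
      linarith
  -- lower bound
  set a₀ : ℝ := 2*C₀*ε₂/ε₁ with ha₀
  set b : ℝ := C₀*(2*ε₂/ε₁) + 2*C₀ with hb
  have ha₀0 : 0 ≤ a₀ := by rw [ha₀]; positivity
  have hb0 : 0 ≤ b := by rw [hb]; positivity
  have hlower : ∀ p q : 𝒩₁, ((netGraph 𝒩₁ ε₁).dist p q : ℝ) ≤
      a₀ * ((netGraph 𝒩₂ ε₂).dist (f p) (f q)) + b := by
    intro p q
    have h1 := hlin p q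
    obtain ⟨w, hwlen⟩ := (hpre₂ (f p) (f q)).exists_walk_length_eq_dist
    have h2 : dist ((f p : 𝒩₂):X) ((f q : 𝒩₂):X) ≤
        2*ε₂*((netGraph 𝒩₂ ε₂).dist (f p) (f q)) := by
      have := walk_dist_le w
      rw [hwlen] at this
      exact_mod_cast this
    have h3 : dist ((p:𝒩₁):X) ((q:𝒩₁):X) ≤
        2*ε₂*((netGraph 𝒩₂ ε₂).dist (f p) (f q)) + 2*ε₂ := by
      have t1 : dist ((p:𝒩₁):X) ((q:𝒩₁):X) ≤
          dist ((p:𝒩₁):X) ((f p : 𝒩₂):X) + dist ((f p : 𝒩₂):X) ((q:𝒩₁):X) := dist_triangle _ _ _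
      have t2 : dist ((f p : 𝒩₂):X) ((q:𝒩₁):X) ≤
          dist ((f p : 𝒩₂):X) ((f q : 𝒩₂):X) + dist ((f q : 𝒩₂):X) ((q:𝒩₁):X) :=
        dist_triangle _ _ _
      have h4 := hf p
      have h5 : dist ((f q : 𝒩₂):X) ((q:𝒩₁):X) < ε₂ := by rw [dist_comm]; exact hf q
      linarith
    have h6 : ((netGraph 𝒩₁ ε₁).dist p q : ℝ) ≤
        C₀ * ((2*ε₂*((netGraph 𝒩₂ ε₂).dist (f p) (f q)) + 2*ε₂)/ε₁ + 2) := by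
      refine le_trans h1 ?_
      apply mul_le_mul_of_nonneg_left _ hC₀0
      have : dist ((p:𝒩₁):X) ((q:𝒩₁):X) / ε₁ ≤
          (2*ε₂*((netGraph 𝒩₂ ε₂).dist (f p) (f q)) + 2*ε₂)/ε₁ := by
        gcongr
      linarith
    calc ((netGraph 𝒩₁ ε₁).dist p q : ℝ) ≤
        C₀ * ((2*ε₂*((netGraph 𝒩₂ ε₂).dist (f p) (f q)) + 2*ε₂)/ε₁ + 2) := h6
    _ = a₀ * ((netGraph 𝒩₂ ε₂).dist (f p) (f q)) + b := by
      rw [ha₀, hb]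
      field_simp
      ring
  -- assemble
  refine ⟨f, ⟨max 1 (max P₂ a₀), le_max_left _ _, b, hb0, ?_⟩, P₂ + 1, by linarith, ?_⟩
  · intro p q
    set a : ℝ := max 1 (max P₂ a₀) with ha
    have ha1 : (1:ℝ) ≤ a := le_max_left _ _
    have hapos : (0:ℝ) < a := lt_of_lt_of_le one_pos ha1
    have haP₂ : P₂ ≤ a := le_trans (le_max_left _ _) (le_max_right _ _)
    have haa₀ : a₀ ≤ a := le_trans (le_max_right _ _) (le_max_right _ _)
    have hd₁0 : (0:ℝ) ≤ ((netGraph 𝒩₁ ε₁).dist p q : ℝ) := Nat.cast_nonneg _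
    have hd₂0 : (0:ℝ) ≤ ((netGraph 𝒩₂ ε₂).dist (f p) (f q) : ℝ) := Nat.cast_nonneg _
    constructor
    · -- lower
      have e1 : (1/a) * ((netGraph 𝒩₁ ε₁).dist p q : ℝ) ≤
          (1/a) * (a₀ * ((netGraph 𝒩₂ ε₂).dist (f p) (f q)) + b) :=
        mul_le_mul_of_nonneg_left (hlower p q) (by positivity)
      have e3 : (a₀/a) * ((netGraph 𝒩₂ ε₂).dist (f p) (f q) : ℝ) ≤
          1 * ((netGraph 𝒩₂ ε₂).dist (f p) (f q) : ℝ) :=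
        mul_le_mul_of_nonneg_right ((div_le_one hapos).2 haa₀) hd₂0
      have e4 : b * (1/a) ≤ b * 1 :=
        mul_le_mul_of_nonneg_left (by rw [div_le_one hapos]; exact ha1) hb0
      have e2 : (1/a) * (a₀ * ((netGraph 𝒩₂ ε₂).dist (f p) (f q)) + b) =
          (a₀/a) * ((netGraph 𝒩₂ ε₂).dist (f p) (f q)) + b * (1/a) := by ring
      rw [e2] at e1
      linarith
    · -- upper
      have := hupper p q
      have h7 : P₂ * ((netGraph 𝒩₁ ε₁).dist p q : ℝ) ≤ a * ((netGraph 𝒩₁ ε₁).dist p q : ℝ) :=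
        mul_le_mul_of_nonneg_right haP₂ hd₁0
      linarith
  · -- fullness
    intro q
    obtain ⟨p', hp'𝒩, hp'd⟩ := net_cover hε₁ hnet₁ (q:X)
    set p : 𝒩₁ := ⟨p', hp'𝒩⟩ with hp
    refine ⟨p, ?_⟩
    have h8 : dist ((q:𝒩₂):X) ((f p : 𝒩₂):X) ≤ R₂ := by
      have t1 : dist ((q:𝒩₂):X) ((f p : 𝒩₂):X) ≤
          dist ((q:𝒩₂):X) ((p:𝒩₁):X) + dist ((p:𝒩₁):X) ((f p : 𝒩₂):X) := dist_triangle _ _ _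
      have h9 := hf p
      rw [hR₂]
      have : dist ((q:𝒩₂):X) ((p:𝒩₁):X) < ε₁ := hp'd
      linarith
    have := hA₂ q (f p) h8
    linarith
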